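/- Let u ∈ ℝ³ be a unit vector, R : ℝ → ℝ^{3×3}, θ : ℝ → ℝ, t₀ ∈ ℝ, ω ∈ ℝ³ and v ∈ ℝ. Suppose R has derivative R(t₀)·ω^× at t₀ and θ has derivative v at t₀. Then the map t ↦ R(t)·Ra(θ(t),u) has derivative R(t₀)·Ra(θ(t₀),u)·(Ra(θ(t₀),u)ᵀ ω + v·u)^× at t₀. -/

import Mathlib

open Matrix

noncomputable section

abbrev M3 : Type := Matrix (Fin 3) (Fin 3) ℝ
abbrev V3 : Type := Fin 3 → ℝ

/-- skew-symmetric matrix associated to `x`: `skew x *ᵥ y = x ×₃ y`. -/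
def skew (x : V3) : M3 :=
  !![0, -x 2, x 1; x 2, 0, -x 0; -x 1, x 0, 0]

/-- the special orthogonal group SO(3) as a subset of 3×3 matrices -/
def SO3 : Set M3 := {R | Rᵀ * R = 1 ∧ R.det = 1}

/-- Rodrigues formula -/
def Ra (θ : ℝ) (u : V3) : M3 :=
  1 + Real.sin θ • skew u + (1 - Real.cos θ) • (skew u * skew u)

/-- `psi M = vec (P_a M)`, the vector part of the antisymmetric projection -/
def psi (M : M3) : V3 :=
  ![(M 2 1 - M 1 2) / 2, (M 0 2 - M 2 0) / 2, (M 1 0 - M 0 1) / 2]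

/-- the angular-warping transformation `T(R,θ) = R · Ra(θ,u)` -/
def Tmap (u : V3) (R : M3) (θ : ℝ) : M3 := R * Ra θ u

/-- the potential function `U(R,θ)` on SO(3) × ℝ -/
def Ufun (A : M3) (u : V3) (γ : ℝ) (R : M3) (θ : ℝ) : ℝ :=
  (A * (1 - Tmap u R θ)).trace + γ / 2 * θ ^ 2

/-- Euclidean norm on ℝ³ -/
def enorm3 (x : V3) : ℝ := Real.sqrt (x ⬝ᵥ x)

/-- Frobenius norm of a 3×3 matrix -/
def fnorm (M : M3) : ℝ := Real.sqrt ((Mᵀ * M).trace)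

/-- `E(M) := (tr(M) I − Mᵀ)/2` -/
def Emap (M : M3) : M3 := (2⁻¹ : ℝ) • (M.trace • (1 : M3) - Mᵀ)

/-- `D_R(R,θ)` from Lemma 2 -/
def DR (A : M3) (u : V3) (R : M3) (θ : ℝ) : M3 :=
  Ra θ u * Emap (A * Tmap u R θ) * (Ra θ u)ᵀ

/-- `D_θ(R,θ)` from Lemma 2 -/
def Dθ (A : M3) (u : V3) (R : M3) (θ : ℝ) : V3 :=
  (Ra θ u * Emap (A * Tmap u R θ)) *ᵥ u - skew (Ra θ u *ᵥ psi (A * Tmap u R θ)) *ᵥ u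

/-- Δ(v,u) from the construction of the synergistic gap -/
def Delta (A : M3) (v u : V3) : ℝ :=
  u ⬝ᵥ ((A.trace • (1 : M3) - A - (2 * (v ⬝ᵥ A *ᵥ v)) • ((1 : M3) - vecMulVec v v)) *ᵥ u)

/-- `v` is a unit eigenvector of `A` -/
def IsUnitEigen (A : M3) (v : V3) : Prop :=
  v ⬝ᵥ v = 1 ∧ ∃ lam : ℝ, A *ᵥ v = lam • v

/-- Ā := (tr(A) I − A)/2 -/
def Abar (A : M3) : M3 := (2⁻¹ : ℝ) • (A.trace • (1 : M3) - A)

/-- `lam` is an eigenvalue of `M` -/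
def IsEigen (M : M3) (lam : ℝ) : Prop := ∃ w : V3, w ≠ 0 ∧ M *ᵥ w = lam • w
attribute [local instance] Matrix.normedAddCommGroup Matrix.normedSpace



set_option maxHeartbeats 2000000 in
lemma skew_conj (u om : V3) (hu : u ⬝ᵥ u = 1) (th : ℝ) :
    skew om * Ra th u = Ra th u * skew ((Ra th u)ᵀ *ᵥ om) := by
  have hu' : u 0 * u 0 + u 1 * u 1 + u 2 * u 2 = 1 := by
    simpa [dotProduct, Fin.sum_univ_three] using hu
  have hsc : Real.sin th * Real.sin th + Real.cos th * Real.cos th = 1 := by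
    nlinarith [Real.sin_sq_add_cos_sq th]
  ext i j
  fin_cases i <;> fin_cases j <;>
    simp only [Ra, skew, Matrix.mul_apply, Matrix.add_apply, Matrix.smul_apply,
      Matrix.one_apply, Fin.sum_univ_three, Matrix.cons_val', Matrix.cons_val_zero,
      Matrix.cons_val_one, Matrix.head_cons, Matrix.head_fin_const, Matrix.empty_val',
      Matrix.cons_val_fin_one, Matrix.cons_val, Matrix.of_apply, smul_eq_mul, Fin.isValue, Fin.ext_iff,
      Matrix.mulVec, Matrix.transpose_apply, dotProduct] <;>
    norm_num <;>
  [ linear_combination ((-1) * (u 0) * (u 2) * (om 1) + (1) * (u 0) * (u 1) * (om 2) + (2) * (Real.cos th) * (u 0) * (u 2) * (om 1) + (-2) * (Real.cos th) * (u 0) * (u 1) * (om 2) + (-1) * (Real.cos th) * (Real.cos th) * (u 0) * (u 2) * (om 1) + (1) * (Real.cos th) * (Real.cos th) * (u 0) * (u 1) * (om 2)) * hu' + ((-1) * (u 0) * (u 2) * (om 1) + (1) * (u 0) * (u 1) * (om 2)) * hsc;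
    linear_combination ((-1) * (u 1) * (u 2) * (om 1) + (1) * (u 1) * (u 1) * (om 2) + (2) * (Real.cos th) * (u 1) * (u 2) * (om 1) + (-2) * (Real.cos th) * (u 1) * (u 1) * (om 2) + (-1) * (Real.cos th) * (Real.cos th) * (u 1) * (u 2) * (om 1) + (1) * (Real.cos th) * (Real.cos th) * (u 1) * (u 1) * (om 2)) * hu' + ((-1) * (u 1) * (u 2) * (om 1) + (1) * (u 1) * (u 1) * (om 2)) * hsc;
    linear_combination ((-1) * (u 2) * (u 2) * (om 1) + (1) * (u 1) * (u 2) * (om 2) + (2) * (Real.cos th) * (u 2) * (u 2) * (om 1) + (-2) * (Real.cos th) * (u 1) * (u 2) * (om 2) + (-1) * (Real.cos th) * (Real.cos th) * (u 2) * (u 2) * (om 1) + (1) * (Real.cos th) * (Real.cos th) * (u 1) * (u 2) * (om 2)) * hu' + ((-1) * (u 2) * (u 2) * (om 1) + (1) * (u 1) * (u 2) * (om 2)) * hsc;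
    linear_combination ((1) * (om 2) + (0) * (u 2) * (u 2) * (om 2) + (0) * (u 1) * (u 1) * (om 2) + (1) * (u 0) * (u 2) * (om 0) + (-1) * (u 0) * (u 0) * (om 2) + (0) * (Real.cos th) * (om 2) + (0) * (Real.cos th) * (u 2) * (u 2) * (om 2) + (0) * (Real.cos th) * (u 1) * (u 1) * (om 2) + (-2) * (Real.cos th) * (u 0) * (u 2) * (om 0) + (2) * (Real.cos th) * (u 0) * (u 0) * (om 2) + (-1) * (Real.cos th) * (Real.cos th) * (om 2) + (0) * (Real.cos th) * (Real.cos th) * (u 2) * (u 2) * (om 2) + (0) * (Real.cos th) * (Real.cos th) * (u 1) * (u 1) * (om 2) + (1) * (Real.cos th) * (Real.cos th) * (u 0) * (u 2) * (om 0) + (-1) * (Real.cos th) * (Real.cos th) * (u 0) * (u 0) * (om 2) + (-1) * (Real.sin th) * (Real.sin th) * (om 2)) * hu' + ((-1) * (om 2) + (1) * (u 2) * (u 2) * (om 2) + (1) * (u 1) * (u 1) * (om 2) + (1) * (u 0) * (u 2) * (om 0)) * hsc;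
    linear_combination ((1) * (u 1) * (u 2) * (om 0) + (-1) * (u 0) * (u 1) * (om 2) + (-2) * (Real.cos th) * (u 1) * (u 2) * (om 0) + (2) * (Real.cos th) * (u 0) * (u 1) * (om 2) + (1) * (Real.cos th) * (Real.cos th) * (u 1) * (u 2) * (om 0) + (-1) * (Real.cos th) * (Real.cos th) * (u 0) * (u 1) * (om 2)) * hu' + ((1) * (u 1) * (u 2) * (om 0) + (-1) * (u 0) * (u 1) * (om 2)) * hsc;
    linear_combination ((1) * (u 2) * (u 2) * (om 0) + (-1) * (u 0) * (u 2) * (om 2) + (-2) * (Real.cos th) * (u 2) * (u 2) * (om 0) + (2) * (Real.cos th) * (u 0) * (u 2) * (om 2) + (1) * (Real.cos th) * (Real.cos th) * (u 2) * (u 2) * (om 0) + (-1) * (Real.cos th) * (Real.cos th) * (u 0) * (u 2) * (om 2)) * hu' + ((1) * (u 2) * (u 2) * (om 0) + (-1) * (u 0) * (u 2) * (om 2)) * hsc;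
    linear_combination ((-1) * (om 1) + (0) * (u 2) * (u 2) * (om 1) + (0) * (u 1) * (u 1) * (om 1) + (-1) * (u 0) * (u 1) * (om 0) + (1) * (u 0) * (u 0) * (om 1) + (0) * (Real.cos th) * (om 1) + (0) * (Real.cos th) * (u 2) * (u 2) * (om 1) + (0) * (Real.cos th) * (u 1) * (u 1) * (om 1) + (2) * (Real.cos th) * (u 0) * (u 1) * (om 0) + (-2) * (Real.cos th) * (u 0) * (u 0) * (om 1) + (1) * (Real.cos th) * (Real.cos th) * (om 1) + (0) * (Real.cos th) * (Real.cos th) * (u 2) * (u 2) * (om 1) + (0) * (Real.cos th) * (Real.cos th) * (u 1) * (u 1) * (om 1) + (-1) * (Real.cos th) * (Real.cos th) * (u 0) * (u 1) * (om 0) + (1) * (Real.cos th) * (Real.cos th) * (u 0) * (u 0) * (om 1) + (1) * (Real.sin th) * (Real.sin th) * (om 1)) * hu' + ((1) * (om 1) + (-1) * (u 2) * (u 2) * (om 1) + (-1) * (u 1) * (u 1) * (om 1) + (-1) * (u 0) * (u 1) * (om 0)) * hsc;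
    linear_combination ((-1) * (u 1) * (u 1) * (om 0) + (1) * (u 0) * (u 1) * (om 1) + (2) * (Real.cos th) * (u 1) * (u 1) * (om 0) + (-2) * (Real.cos th) * (u 0) * (u 1) * (om 1) + (-1) * (Real.cos th) * (Real.cos th) * (u 1) * (u 1) * (om 0) + (1) * (Real.cos th) * (Real.cos th) * (u 0) * (u 1) * (om 1)) * hu' + ((-1) * (u 1) * (u 1) * (om 0) + (1) * (u 0) * (u 1) * (om 1)) * hsc;
    linear_combination ((-1) * (u 1) * (u 2) * (om 0) + (1) * (u 0) * (u 2) * (om 1) + (2) * (Real.cos th) * (u 1) * (u 2) * (om 0) + (-2) * (Real.cos th) * (u 0) * (u 2) * (om 1) + (-1) * (Real.cos th) * (Real.cos th) * (u 1) * (u 2) * (om 0) + (1) * (Real.cos th) * (Real.cos th) * (u 0) * (u 2) * (om 1)) * hu' + ((-1) * (u 1) * (u 2) * (om 0) + (1) * (u 0) * (u 2) * (om 1)) * hsc]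


lemma Ra_mul_skew (u : V3) (hu : u ⬝ᵥ u = 1) (th : ℝ) :
    Ra th u * skew u = Real.cos th • skew u + Real.sin th • (skew u * skew u) := by
  have hu' : u 0 * u 0 + u 1 * u 1 + u 2 * u 2 = 1 := by
    simpa [dotProduct, Fin.sum_univ_three] using hu
  ext i j
  fin_cases i <;> fin_cases j <;>
    simp only [Ra, skew, Matrix.mul_apply, Matrix.add_apply, Matrix.smul_apply,
      Matrix.one_apply, Fin.sum_univ_three, Matrix.cons_val', Matrix.cons_val_zero,
      Matrix.cons_val_one, Matrix.head_cons, Matrix.head_fin_const, Matrix.empty_val',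
      Matrix.cons_val_fin_one, Matrix.cons_val, Matrix.of_apply, smul_eq_mul, Fin.isValue, Fin.ext_iff] <;>
    norm_num <;>
  [ linear_combination ((0:ℝ)) * hu';
    linear_combination ((1) * (u 2) + (-1) * (Real.cos th) * (u 2)) * hu';
    linear_combination ((-1) * (u 1) + (1) * (Real.cos th) * (u 1)) * hu';
    linear_combination ((-1) * (u 2) + (1) * (Real.cos th) * (u 2)) * hu';
    linear_combination ((0:ℝ)) * hu';
    linear_combination ((1) * (u 0) + (-1) * (Real.cos th) * (u 0)) * hu';
    linear_combination ((1) * (u 1) + (-1) * (Real.cos th) * (u 1)) * hu';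
    linear_combination ((-1) * (u 0) + (1) * (Real.cos th) * (u 0)) * hu';
    linear_combination ((0:ℝ)) * hu']

lemma hasDerivAt_matmul {f g : ℝ → M3} {f' g' : M3} {t : ℝ}
    (hf : HasDerivAt f f' t) (hg : HasDerivAt g g' t) :
    HasDerivAt (fun s => f s * g s) (f' * g t + f t * g') t := by
  have hfe : ∀ i k, HasDerivAt (fun s => f s i k) (f' i k) t :=
    fun i k => hasDerivAt_pi.mp (hasDerivAt_pi.mp hf i) k
  have hge : ∀ k j, HasDerivAt (fun s => g s k j) (g' k j) t :=
    fun k j => hasDerivAt_pi.mp (hasDerivAt_pi.mp hg k) j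
  refine hasDerivAt_pi.mpr ?_
  intro i
  refine hasDerivAt_pi.mpr ?_
  intro j
  have : HasDerivAt (fun s => ∑ k : Fin 3, f s i k * g s k j)
      (∑ k : Fin 3, (f' i k * g t k j + f t i k * g' k j)) t :=
    HasDerivAt.fun_sum fun k _ => (hfe i k).mul (hge k j)
  simpa [Matrix.mul_apply, Matrix.add_apply, Finset.sum_add_distrib] using this

lemma skew_add' (x y : V3) : skew (x + y) = skew x + skew y := by
  ext i j
  fin_cases i <;> fin_cases j <;> simp [skew] <;> ring

lemma skew_smul' (c : ℝ) (x : V3) : skew (c • x) = c • skew x := by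
  ext i j
  fin_cases i <;> fin_cases j <;> simp [skew] <;> ring


theorem deriv_of_transformation_map
    (u : V3) (hu : u ⬝ᵥ u = 1) (R : ℝ → M3) (θ : ℝ → ℝ) (t₀ : ℝ) (ω : V3) (v : ℝ)
    (hR : HasDerivAt R (R t₀ * skew ω) t₀) (hθ : HasDerivAt θ v t₀) :
    HasDerivAt (fun t => R t * Ra (θ t) u)
      (R t₀ * Ra (θ t₀) u * skew ((Ra (θ t₀) u)ᵀ *ᵥ ω + v • u)) t₀ := by
  -- derivative of t ↦ Ra (θ t) u
  have hsin : HasDerivAt (fun t => Real.sin (θ t)) (Real.cos (θ t₀) * v) t₀ :=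
    (Real.hasDerivAt_sin (θ t₀)).comp t₀ hθ
  have hcos : HasDerivAt (fun t => 1 - Real.cos (θ t)) (Real.sin (θ t₀) * v) t₀ := by
    have : HasDerivAt (fun t => Real.cos (θ t)) (-Real.sin (θ t₀) * v) t₀ :=
      (Real.hasDerivAt_cos (θ t₀)).comp t₀ hθ
    simpa [Pi.sub_def] using (hasDerivAt_const t₀ (1:ℝ)).sub this
  have hRa : HasDerivAt (fun t => Ra (θ t) u)
      ((Real.cos (θ t₀) * v) • skew u + (Real.sin (θ t₀) * v) • (skew u * skew u)) t₀ := by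
    have h1 : HasDerivAt (fun t => Real.sin (θ t) • skew u)
        ((Real.cos (θ t₀) * v) • skew u) t₀ := hsin.smul_const (skew u)
    have h2 : HasDerivAt (fun t => (1 - Real.cos (θ t)) • (skew u * skew u))
        ((Real.sin (θ t₀) * v) • (skew u * skew u)) t₀ := hcos.smul_const _
    have := ((hasDerivAt_const t₀ (1:M3)).add h1).add h2
    simp only [Ra, add_assoc, Pi.add_def, zero_add] at this ⊢
    exact this
  have h := hasDerivAt_matmul hR hRa
  convert h using 1
  have key := skew_conj u ω hu (θ t₀)
  have hrs := Ra_mul_skew u hu (θ t₀)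
  rw [skew_add', skew_smul', mul_add, mul_add]
  congr 1
  · rw [mul_assoc, ← key, ← mul_assoc]
  · rw [mul_assoc, mul_smul_comm, hrs]
    simp only [smul_add, smul_smul, mul_add, mul_smul_comm]
    rw [mul_comm v (Real.cos (θ t₀)), mul_comm v (Real.sin (θ t₀))]
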